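/- If (X_n)_{n∈ℕ} is a sequence of almost full subsets of [0,1], then the countable intersection ⋂_{n∈ℕ} X_n is almost full. -/

import Mathlib

open MeasureTheory Filter Set

noncomputable section

/-- A sequence of functions on `[0,1]` is *regular* if each member is continuous and
nonnegative on `[0,1]` and has integral over `[0,1]` strictly less than `2⁻ⁿ`. -/
def RegularSeq (h : ℕ → ℝ → ℝ) : Prop :=
  ∀ n : ℕ, ContinuousOn (h n) (Set.Icc 0 1) ∧
    (∀ x ∈ Set.Icc (0:ℝ) 1, 0 ≤ h n x) ∧
    (∫ x in (0:ℝ)..1, h n x) < (1/2 : ℝ) ^ n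

/-- The set `Ω(𝔥)` of points of `[0,1]` at which the partial sums of `∑ hₙ(x)` are
bounded above. -/
def Omega (h : ℕ → ℝ → ℝ) : Set ℝ :=
  {x ∈ Set.Icc (0:ℝ) 1 | ∃ γ : ℝ, ∀ m : ℕ, ∑ n ∈ Finset.range (m+1), h n x ≤ γ}

/-- A subset `X ⊆ [0,1]` is *almost full* if `Ω(𝔥) ⊆ X` for some regular sequence `𝔥`. -/
def AlmostFull (X : Set ℝ) : Prop :=
  ∃ h : ℕ → ℝ → ℝ, RegularSeq h ∧ Omega h ⊆ X

/-- The intersection of a sequence of almost full subsets of `[0,1]` is almost full. -/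
theorem stmt4 (X : ℕ → Set ℝ) (hX' : ∀ n, X n ⊆ Set.Icc 0 1)
    (hX : ∀ n, AlmostFull (X n)) :
    AlmostFull (⋂ n, X n) := by
  choose h hreg hsub using hX
  set g : ℕ → ℝ → ℝ := fun k x => ∑ i ∈ Finset.range (k+1), h i (k+i+2) x with hg
  have gnn : ∀ k, ∀ x ∈ Set.Icc (0:ℝ) 1, 0 ≤ g k x := fun k x hx =>
    Finset.sum_nonneg fun i _ => (hreg i (k+i+2)).2.1 x hx
  refine ⟨g, ?_, ?_⟩
  · intro k
    refine ⟨continuousOn_finset_sum _ fun i _ => (hreg i (k+i+2)).1, gnn k, ?_⟩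
    have hint : ∀ i ∈ Finset.range (k+1), IntervalIntegrable (h i (k+i+2)) volume 0 1 := by
      intro i _
      apply ContinuousOn.intervalIntegrable
      rw [Set.uIcc_of_le (by norm_num : (0:ℝ) ≤ 1)]
      exact (hreg i (k+i+2)).1
    have : (∫ x in (0:ℝ)..1, g k x)
        = ∑ i ∈ Finset.range (k+1), ∫ x in (0:ℝ)..1, h i (k+i+2) x :=
      intervalIntegral.integral_finset_sum hint
    rw [this]
    calc ∑ i ∈ Finset.range (k+1), ∫ x in (0:ℝ)..1, h i (k+i+2) x
        < ∑ i ∈ Finset.range (k+1), (1/2:ℝ)^(k+i+2) :=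
          Finset.sum_lt_sum_of_nonempty ⟨0, by simp⟩ fun i _ => (hreg i (k+i+2)).2.2
      _ ≤ (1/2:ℝ)^k := by
          have h1 : ∑ i ∈ Finset.range (k+1), (1/2:ℝ)^(k+i+2)
              = (1/2:ℝ)^(k+2) * ∑ i ∈ Finset.range (k+1), (1/2:ℝ)^i := by
            rw [Finset.mul_sum]
            refine Finset.sum_congr rfl fun i _ => ?_
            rw [show k+i+2 = (k+2)+i by ring, pow_add]
          have h2 : ∑ i ∈ Finset.range (k+1), (1/2:ℝ)^i ≤ 2 := by
            have := geom_sum_eq (by norm_num : (1/2:ℝ) ≠ 1) (k+1)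
            rw [this]
            have : (0:ℝ) < (1/2:ℝ)^(k+1) := by positivity
            rw [div_le_iff_of_neg (by norm_num : (1/2:ℝ) - 1 < 0)]
            nlinarith
          have h3 : (0:ℝ) < (1/2:ℝ)^(k+2) := by positivity
          rw [h1]
          calc (1/2:ℝ)^(k+2) * ∑ i ∈ Finset.range (k+1), (1/2:ℝ)^i
              ≤ (1/2:ℝ)^(k+2) * 2 := by nlinarith
            _ ≤ (1/2:ℝ)^k := by
                rw [show k+2 = k+2 from rfl, pow_add]
                nlinarith [pow_pos (by norm_num : (0:ℝ) < 1/2) k]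
  · intro x hx
    obtain ⟨hx01, γ, hγ⟩ := hx
    simp only [Set.mem_iInter]
    intro i
    apply hsub i
    refine ⟨hx01, ∑ j ∈ Finset.range (2*i+2), h i j x + γ, ?_⟩
    intro m
    -- key: for any N, ∑_{k ∈ Ico i N} h i (k+i+2) x ≤ γ
    have key : ∀ N : ℕ, ∑ k ∈ Finset.Ico i N, h i (k+i+2) x ≤ γ := by
      intro N
      have step : ∀ k ∈ Finset.Ico i N, h i (k+i+2) x ≤ g k x := by
        intro k hk
        rw [Finset.mem_Ico] at hk
        exact Finset.single_le_sum (f := fun i' => h i' (k+i'+2) x)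
          (fun i' _ => (hreg i' (k+i'+2)).2.1 x hx01)
          (Finset.mem_range.mpr (Nat.lt_succ_of_le hk.1))
      calc ∑ k ∈ Finset.Ico i N, h i (k+i+2) x
          ≤ ∑ k ∈ Finset.Ico i N, g k x := Finset.sum_le_sum step
        _ ≤ ∑ k ∈ Finset.range (N+1), g k x := by
            apply Finset.sum_le_sum_of_subset_of_nonneg
            · intro k hk
              rw [Finset.mem_Ico] at hk
              exact Finset.mem_range.mpr (Nat.lt_succ_of_lt hk.2)
            · exact fun k _ _ => gnn k x hx01
        _ ≤ γ := hγ N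
    -- now bound partial sum up to m
    set M := m + 2*i + 3 with hM
    have hnn : ∀ j, 0 ≤ h i j x := fun j => (hreg i j).2.1 x hx01
    have step1 : ∑ j ∈ Finset.range (m+1), h i j x ≤ ∑ j ∈ Finset.range M, h i j x := by
      apply Finset.sum_le_sum_of_subset_of_nonneg
      · exact Finset.range_subset_range.mpr (by omega)
      · exact fun j _ _ => hnn j
    have split : ∑ j ∈ Finset.range M, h i j x
        = ∑ j ∈ Finset.range (2*i+2), h i j x + ∑ j ∈ Finset.Ico (2*i+2) M, h i j x := by
      rw [Finset.range_eq_Ico,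
        ← Finset.sum_Ico_consecutive (fun j => h i j x) (Nat.zero_le (2*i+2)) (by omega : 2*i+2 ≤ M), Finset.range_eq_Ico]
    have reidx : ∑ j ∈ Finset.Ico (2*i+2) M, h i j x
        = ∑ k ∈ Finset.Ico i (M - i - 2), h i (k+i+2) x := by
      rw [Finset.sum_Ico_eq_sum_range, Finset.sum_Ico_eq_sum_range]
      have e1 : M - (2*i+2) = M - i - 2 - i := by omega
      rw [e1]
      refine Finset.sum_congr rfl fun k _ => ?_
      congr 1
      omega
    calc ∑ j ∈ Finset.range (m+1), h i j x
        ≤ ∑ j ∈ Finset.range M, h i j x := step1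
      _ = ∑ j ∈ Finset.range (2*i+2), h i j x + ∑ j ∈ Finset.Ico (2*i+2) M, h i j x := split
      _ ≤ ∑ j ∈ Finset.range (2*i+2), h i j x + γ := by
          rw [reidx]
          exact add_le_add (le_refl _) (key _)
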